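/- Let A be a commutative ℝ-algebra, let X : Fin n → Derivation ℝ A A be a family of derivations and let Y : Fin r → Derivation ℝ A A be an r-pseudosymmetry of the family X, i.e. there exist β : Fin r → Fin n → Fin r → A and α : Fin r → Fin n → Fin n → A with ⁅Y k, X i⁆ = ∑ l, β k i l • Y l + ∑ s, α k i s • X s for all k and i. Let ξ : Fin n → A and ν : Fin m → A satisfy Y k (ξ h) = 0 and Y k (ν j) = 0 for all k, h, j. Let M be the n×n matrix over A with entries M i h = X i (ξ h) and suppose M is invertible (its determinant is a unit of A). Define the n×m matrix N = M⁻¹ * P, where P i j = X i (ν j). Then Y k (N i j) = 0 for all k, i and j. -/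

import Mathlib

private lemma der_sum_apply {A : Type*} [CommRing A] [Algebra ℝ A] {ι : Type*}
    (s : Finset ι) (c : ι → A) (Y : ι → Derivation ℝ A A) (a : A) :
    ((∑ l ∈ s, c l • Y l : Derivation ℝ A A) a) = ∑ l ∈ s, c l * (Y l) a := by
  classical
  induction s using Finset.induction with
  | empty => simp
  | insert _ _ h ih => simp [Finset.sum_insert h, ih]

private lemma der_map_mul {p q t : Type*} [Fintype q] {A : Type*} [CommRing A] [Algebra ℝ A]
    (d : Derivation ℝ A A) (Q : Matrix p q A) (R : Matrix q t A) :
    (Q * R).map d = Q.map d * R + Q * R.map d := by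
  ext i j
  simp only [Matrix.map_apply, Matrix.mul_apply, map_sum, Derivation.leibniz,
    smul_eq_mul, Finset.sum_add_distrib, Matrix.add_apply]
  rw [add_comm]
  congr 1
  exact Finset.sum_congr rfl fun x _ => mul_comm _ _

theorem r_pseudosymmetry_derived_invariants
    {n m r : ℕ} {A : Type*} [CommRing A] [Algebra ℝ A]
    (X : Fin n → Derivation ℝ A A) (Y : Fin r → Derivation ℝ A A)
    (β : Fin r → Fin n → Fin r → A) (α : Fin r → Fin n → Fin n → A)
    (hps : ∀ k i, ⁅Y k, X i⁆ = (∑ l, β k i l • Y l) + ∑ s, α k i s • X s)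
    (ξ : Fin n → A) (ν : Fin m → A)
    (hξ : ∀ k h, (Y k) (ξ h) = 0) (hν : ∀ k j, (Y k) (ν j) = 0)
    (M : Matrix (Fin n) (Fin n) A) (hM : ∀ i h, M i h = (X i) (ξ h))
    (hdet : IsUnit M.det)
    (P : Matrix (Fin n) (Fin m) A) (hP : ∀ i j, P i j = (X i) (ν j)) :
    ∀ k i j, (Y k) ((M⁻¹ * P) i j) = 0 := by
  intro k i j
  set C : Matrix (Fin n) (Fin n) A := Matrix.of (α k) with hC
  have hbr : ∀ i a, (Y k) ((X i) a) - (X i) ((Y k) a)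
      = (∑ l, β k i l * (Y l) a) + ∑ s, α k i s * (X s) a := by
    intro i a
    have := congrArg (fun D : Derivation ℝ A A => D a) (hps k i)
    simp only [Derivation.commutator_apply, Derivation.add_apply] at this
    rw [this, der_sum_apply, der_sum_apply]
  have hMmap : M.map (Y k) = C * M := by
    ext i h
    have h1 := hbr i (ξ h)
    simp only [hξ, map_zero, sub_zero, hξ, mul_zero, Finset.sum_const_zero, zero_add] at h1
    simp [Matrix.mul_apply, hM, hC, h1]
  have hPmap : P.map (Y k) = C * P := by
    ext i h
    have h1 := hbr i (ν h)
    simp only [hν, map_zero, sub_zero, mul_zero, Finset.sum_const_zero, zero_add] at h1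
    simp [Matrix.mul_apply, hP, hC, h1]
  have hinv1 : M⁻¹ * M = 1 := Matrix.nonsing_inv_mul M hdet
  have hinv2 : M * M⁻¹ = 1 := Matrix.mul_nonsing_inv M hdet
  have h1map : (1 : Matrix (Fin n) (Fin n) A).map (Y k) = 0 := by
    ext a b
    by_cases h : a = b <;> simp [Matrix.one_apply, h]
  have key : (M⁻¹).map (Y k) * M + M⁻¹ * (C * M) = 0 := by
    have := der_map_mul (Y k) (M⁻¹) M
    rw [hinv1, h1map, hMmap] at this
    exact this.symm
  have hMi : (M⁻¹).map (Y k) = -(M⁻¹ * C) := by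
    have h2 := congrArg (fun Q => Q * M⁻¹) key
    simp only [add_mul, zero_mul, mul_assoc, hinv2, mul_one] at h2
    exact eq_neg_of_add_eq_zero_left h2
  have final : (M⁻¹ * P).map (Y k) = 0 := by
    rw [der_map_mul (Y k) (M⁻¹) P, hMi, hPmap]
    rw [Matrix.neg_mul, Matrix.mul_assoc, neg_add_cancel]
  have := congrFun (congrFun final i) j
  simpa using this
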